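/- arXiv:0707.1387 — 4 statements merged into one kernel-verified Lean document; each statement's English description precedes it below -/
import Mathlib

section
/- The dual graph Γ_D of any Enriques diagram D is a tree (i.e., it is connected and contains no loops/cycles). -/
/-- An Enriques diagram: a finite rooted tree (partial order `le`, each non-root
vertex with immediate predecessor `pred`) with a proximity relation `prox`
satisfying the standard axioms. -/
structure EnriquesDiagram (V : Type) [Fintype V] [DecidableEq V] where
  le : V → V → Prop
  le_refl : ∀ a, le a a
  le_trans : ∀ a b c, le a b → le b c → le a c
  le_antisymm : ∀ a b, le a b → le b a → a = b
  root : V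
  root_le : ∀ v, le root v
  pred : V → V
  pred_le : ∀ v, v ≠ root → le (pred v) v
  pred_ne : ∀ v, v ≠ root → pred v ≠ v
  pred_max : ∀ v q, v ≠ root → le q v → q ≠ v → le q (pred v)
  prox : V → V → Prop
  prox_pred : ∀ v, v ≠ root → prox v (pred v)
  root_not_prox : ∀ q, ¬ prox root q
  prox_gt : ∀ p q, prox p q → le q p ∧ p ≠ q
  prox_at_most_two : ∀ p a b c, prox p a → prox p b → prox p c → a = b ∨ b = c ∨ a = c
  third_unique : ∀ p q a b, prox p q → prox a p → prox a q → prox b p → prox b q → a = b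
  prox_pred_prox : ∀ p q', p ≠ root → prox p q' → q' ≠ pred p → prox (pred p) q'

namespace EnriquesDiagram

variable {V : Type} [Fintype V] [DecidableEq V] (D : EnriquesDiagram V)

/-- Number of vertices of `D` proximate to `p`. -/
noncomputable def r (p : V) : ℕ := Set.ncard {q | D.prox q p}

/-- Weight of `p` in the dual graph: `r p + 1`. -/
noncomputable def omega (p : V) : ℕ := D.r p + 1

/-- `p` is extremal: it has no successor. -/
def Extremal (p : V) : Prop := ∀ q, D.le p q → q = p

/-- `p` is free: proximate to exactly one vertex. -/
def Free (p : V) : Prop := ∃! q, D.prox p q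

/-- `p` is satellite: proximate to two distinct vertices. -/
def Satellite (p : V) : Prop := ∃ q₁ q₂, q₁ ≠ q₂ ∧ D.prox p q₁ ∧ D.prox p q₂

/-- `p` is maximal among the vertices of `D` proximate to `q`. -/
def MaxProx (p q : V) : Prop := D.prox p q ∧ ∀ u, D.prox u q → D.le p u → u = p

/-- The dual graph `Γ_D`: `p` and `q` are adjacent iff one is maximal among the
vertices proximate to the other. -/
def dualGraph : SimpleGraph V where
  Adj p q := p ≠ q ∧ (D.MaxProx p q ∨ D.MaxProx q p)
  symm := by
    constructor
    intro p q h
    exact ⟨h.1.symm, h.2.symm⟩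
  loopless := by
    constructor
    intro p h
    exact h.1 rfl

end EnriquesDiagram

namespace EnriquesDiagram

variable {V : Type} [Fintype V] [DecidableEq V] {D : EnriquesDiagram V}

/-! ### Order measures -/

/-- Number of elements below `v` (inclusive). -/
noncomputable def md (D : EnriquesDiagram V) (v : V) : ℕ := Set.ncard {x | D.le x v}

/-- Number of elements above `v` (inclusive). -/
noncomputable def nu (D : EnriquesDiagram V) (v : V) : ℕ := Set.ncard {x | D.le v x}

lemma md_pos (v : V) : 0 < md D v :=
  (Set.ncard_pos (Set.toFinite _)).2 ⟨v, D.le_refl v⟩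

lemma nu_pos (v : V) : 0 < nu D v :=
  (Set.ncard_pos (Set.toFinite _)).2 ⟨v, D.le_refl v⟩

lemma md_lt {x v : V} (h : D.le x v) (hne : x ≠ v) : md D x < md D v := by
  apply Set.ncard_lt_ncard _ (Set.toFinite _)
  constructor
  · intro y hy
    exact D.le_trans y x v hy h
  · intro hsub
    have hv : v ∈ {y | D.le y v} := D.le_refl v
    have : v ∈ {y | D.le y x} := hsub hv
    exact hne (D.le_antisymm x v h this)

lemma nu_lt {v x : V} (h : D.le v x) (hne : x ≠ v) : nu D x < nu D v := by
  apply Set.ncard_lt_ncard _ (Set.toFinite _)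
  constructor
  · intro y hy
    exact D.le_trans v x y h hy
  · intro hsub
    have hv : v ∈ {y | D.le v y} := D.le_refl v
    have : v ∈ {y | D.le x y} := hsub hv
    exact hne (D.le_antisymm x v this h)

lemma eq_root_of_le_root {v : V} (h : D.le v D.root) : v = D.root :=
  D.le_antisymm v D.root h (D.root_le v)

/-! ### Basic order lemmas -/

/-- Ancestors of a vertex form a chain. -/
lemma chain_below : ∀ n (a x y : V), md D a ≤ n → D.le x a → D.le y a →
    D.le x y ∨ D.le y x := by
  intro n
  induction n with
  | zero => intro a x y hn _ _; exact absurd hn (by simpa using (md_pos a).ne')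
  | succ n ih =>
    intro a x y hn hxa hya
    by_cases hx : x = a
    · subst hx; exact Or.inr hya
    by_cases hy : y = a
    · subst hy; exact Or.inl hxa
    have haroot : a ≠ D.root := by
      rintro rfl
      exact hx (eq_root_of_le_root hxa)
    have h1 : D.le x (D.pred a) := D.pred_max a x haroot hxa hx
    have h2 : D.le y (D.pred a) := D.pred_max a y haroot hya hy
    have hlt : md D (D.pred a) < md D a := md_lt (D.pred_le a haroot) (D.pred_ne a haroot)
    exact ih (D.pred a) x y (by omega) h1 h2

lemma chain_below' {a x y : V} (hxa : D.le x a) (hya : D.le y a) :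
    D.le x y ∨ D.le y x :=
  chain_below (md D a) a x y le_rfl hxa hya

/-- Existence of the "witness": the ancestor of `a` sitting immediately above `b`. -/
lemma exists_witness : ∀ n (a b : V), md D a ≤ n → D.le b a → b ≠ a →
    ∃ w, w ≠ D.root ∧ D.pred w = b ∧ D.le w a := by
  intro n
  induction n with
  | zero => intro a b hn _ _; exact absurd hn (by simpa using (md_pos a).ne')
  | succ n ih =>
    intro a b hn hba hne
    have haroot : a ≠ D.root := by
      rintro rfl
      exact hne (eq_root_of_le_root hba)
    by_cases hpb : D.pred a = b
    · exact ⟨a, haroot, hpb, D.le_refl a⟩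
    · have h1 : D.le b (D.pred a) := D.pred_max a b haroot hba hne
      have hlt : md D (D.pred a) < md D a := md_lt (D.pred_le a haroot) (D.pred_ne a haroot)
      obtain ⟨w, hw1, hw2, hw3⟩ := ih (D.pred a) b (by omega) h1 (fun h => hpb h.symm)
      exact ⟨w, hw1, hw2, D.le_trans w (D.pred a) a hw3 (D.pred_le a haroot)⟩

lemma exists_witness' {a b : V} (hba : D.le b a) (hne : b ≠ a) :
    ∃ w, w ≠ D.root ∧ D.pred w = b ∧ D.le w a :=
  exists_witness (md D a) a b le_rfl hba hne

/-- Uniqueness of the witness. -/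
lemma witness_unique {a w1 w2 : V} (h1 : D.le w1 a) (h2 : D.le w2 a)
    (hr1 : w1 ≠ D.root) (hr2 : w2 ≠ D.root) (hp : D.pred w1 = D.pred w2) : w1 = w2 := by
  have key : ∀ u v : V, u ≠ D.root → v ≠ D.root → D.pred u = D.pred v → D.le u v →
      u ≠ v → False := by
    intro u v hu hv hpuv huv hne
    have := D.pred_max v u hv huv hne
    rw [← hpuv] at this
    have h' := D.pred_le u hu
    exact D.pred_ne u hu (D.le_antisymm _ _ h' this)
  rcases chain_below' h1 h2 with h | h
  · by_contra hne; exact key w1 w2 hr1 hr2 hp h hne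
  · by_contra hne; exact key w2 w1 hr2 hr1 hp.symm h (Ne.symm hne)

/-- Descent of proximity along the chain of ancestors. -/
lemma descent : ∀ n (a b y : V), md D a ≤ n → D.prox a b → D.le y a → D.le b y →
    y ≠ b → D.prox y b := by
  intro n
  induction n with
  | zero => intro a b y hn _ _ _ _; exact absurd hn (by simpa using (md_pos a).ne')
  | succ n ih =>
    intro a b y hn hab hya hby hyb
    by_cases hy : y = a
    · subst hy; exact hab
    have haroot : a ≠ D.root := by
      rintro rfl
      exact D.root_not_prox b hab
    have h1 : D.le y (D.pred a) := D.pred_max a y haroot hya hy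
    by_cases hpb : D.pred a = b
    · rw [hpb] at h1
      exact absurd (D.le_antisymm y b h1 hby) hyb
    · have h2 : D.prox (D.pred a) b := D.prox_pred_prox a b haroot hab (fun h => hpb h.symm)
      have hlt : md D (D.pred a) < md D a := md_lt (D.pred_le a haroot) (D.pred_ne a haroot)
      exact ih (D.pred a) b y (by omega) h2 h1 hby hyb

/-- Elements proximate to `b` lying above a common element proximate to `b` are comparable. -/
lemma chainS : ∀ n (c b a1 a2 : V), nu D c ≤ n → D.prox c b → D.prox a1 b → D.prox a2 b →
    D.le c a1 → D.le c a2 → D.le a1 a2 ∨ D.le a2 a1 := by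
  intro n
  induction n with
  | zero => intro c b a1 a2 hn _ _ _ _ _; exact absurd hn (by simpa using (nu_pos c).ne')
  | succ n ih =>
    intro c b a1 a2 hn hcb h1b h2b hc1 hc2
    by_cases he1 : c = a1
    · subst he1; exact Or.inl hc2
    by_cases he2 : c = a2
    · subst he2; exact Or.inr hc1
    have hbc : D.le b c := (D.prox_gt c b hcb).1
    have hcb' : c ≠ b := (D.prox_gt c b hcb).2
    -- construct common witness
    have hW : ∀ a : V, D.prox a b → D.le c a → c ≠ a →
        ∃ w, w ≠ D.root ∧ D.pred w = c ∧ D.le w a ∧ D.prox w c ∧ D.prox w b := by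
      intro a hab hca hne
      obtain ⟨w, hw1, hw2, hw3⟩ := exists_witness' hca hne
      have hwc : D.prox w c := by
        have := D.prox_pred w hw1
        rwa [hw2] at this
      have hcw : D.le c w := by
        have := D.pred_le w hw1
        rwa [hw2] at this
      have hwb : D.prox w b := by
        refine descent (md D a) a b w le_rfl hab hw3 (D.le_trans b c w hbc hcw) ?_
        intro hwe
        exact hcb' (D.le_antisymm c b (hwe ▸ hcw) hbc)
      exact ⟨w, hw1, hw2, hw3, hwc, hwb⟩
    obtain ⟨w1, hw11, hw12, hw13, hw14, hw15⟩ := hW a1 h1b hc1 he1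
    obtain ⟨w2, hw21, hw22, hw23, hw24, hw25⟩ := hW a2 h2b hc2 he2
    have heq : w1 = w2 := D.third_unique c b w1 w2 hcb hw14 hw15 hw24 hw25
    subst heq
    have hcw : D.le c w1 := by
      have := D.pred_le w1 hw11
      rwa [hw12] at this
    have hlt : nu D w1 < nu D c := by
      refine nu_lt hcw ?_
      rintro rfl
      exact D.pred_ne w1 hw11 hw12
    exact ih w1 b a1 a2 (by omega) hw15 h1b h2b hw13 hw23

/-- Two maximal proximate points of `b` above a common proximate point coincide. -/
lemma maxprox_eq {w b a1 a2 : V} (hwb : D.prox w b) (h1 : D.MaxProx a1 b)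
    (h2 : D.MaxProx a2 b) (hw1 : D.le w a1) (hw2 : D.le w a2) : a1 = a2 := by
  rcases chainS (nu D w) w b a1 a2 le_rfl hwb h1.1 h2.1 hw1 hw2 with h | h
  · exact (h1.2 a2 h2.1 h).symm
  · exact h2.2 a1 h1.1 h

/-! ### The dual graph -/

lemma adj_iff {x y : V} :
    D.dualGraph.Adj x y ↔ x ≠ y ∧ (D.MaxProx x y ∨ D.MaxProx y x) := Iff.rfl

lemma adj_of_maxProx {a q : V} (h : D.MaxProx a q) : D.dualGraph.Adj a q :=
  ⟨(D.prox_gt a q h.1).2, Or.inl h⟩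

/-- Orientation of an edge across a "cut": if `w ≤ x` but `¬ w ≤ y`, the edge goes down. -/
lemma orient {w x y : V} (h : D.dualGraph.Adj x y) (hwx : D.le w x) (hwy : ¬ D.le w y) :
    D.MaxProx x y := by
  rcases h.2 with h' | h'
  · exact h'
  · exact absurd (D.le_trans w x y hwx (D.prox_gt y x h'.1).1) hwy

/-! ### Connectivity -/

lemma reach_pred : ∀ n (p : V), nu D p ≤ n → p ≠ D.root →
    D.dualGraph.Reachable p (D.pred p) := by
  intro n
  induction n with
  | zero => intro p hn _; exact absurd hn (by simpa using (nu_pos p).ne')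
  | succ n ih =>
    intro p hnp hproot
    -- every element above p is reachable from p
    have inner : ∀ m (u : V), md D u ≤ m → D.le p u → D.dualGraph.Reachable p u := by
      intro m
      induction m with
      | zero => intro u hm _; exact absurd hm (by simpa using (md_pos u).ne')
      | succ m ihm =>
        intro u hmu hpu
        by_cases hup : u = p
        · subst hup; exact SimpleGraph.Reachable.refl u
        have huroot : u ≠ D.root := by
          rintro rfl
          exact hup (eq_root_of_le_root hpu).symm
        have h1 : D.le p (D.pred u) := D.pred_max u p huroot hpu (fun h => hup h.symm)
        have hlt : md D (D.pred u) < md D u := md_lt (D.pred_le u huroot) (D.pred_ne u huroot)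
        have r1 : D.dualGraph.Reachable p (D.pred u) := ihm (D.pred u) (by omega) h1
        have hnu : nu D u ≤ n := by
          have := nu_lt hpu hup
          omega
        have r2 : D.dualGraph.Reachable u (D.pred u) := ih u hnu huroot
        exact r1.trans r2.symm
    -- pick the maximal element of those proximate to `pred p` lying above `p`
    set S : Set V := {x | D.prox x (D.pred p) ∧ D.le p x} with hS
    have hSne : S.Nonempty := ⟨p, D.prox_pred p hproot, D.le_refl p⟩
    obtain ⟨m, hmS, hmin⟩ := Set.exists_min_image S (nu D) (Set.toFinite S) hSne
    have hmax : D.MaxProx m (D.pred p) := by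
      refine ⟨hmS.1, fun u hu hmu => ?_⟩
      by_contra hne
      have : u ∈ S := ⟨hu, D.le_trans p m u hmS.2 hmu⟩
      have := hmin u this
      have := nu_lt hmu hne
      omega
    have radj : D.dualGraph.Reachable m (D.pred p) := (adj_of_maxProx hmax).reachable
    exact (inner (md D m) m le_rfl hmS.2).trans radj

lemma reach_root : ∀ n (v : V), md D v ≤ n → D.dualGraph.Reachable v D.root := by
  intro n
  induction n with
  | zero => intro v hn; exact absurd hn (by simpa using (md_pos v).ne')
  | succ n ih =>
    intro v hn
    by_cases hv : v = D.root
    · subst hv; exact SimpleGraph.Reachable.refl _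
    have h1 : D.dualGraph.Reachable v (D.pred v) := reach_pred (nu D v) v le_rfl hv
    have hlt : md D (D.pred v) < md D v := md_lt (D.pred_le v hv) (D.pred_ne v hv)
    exact h1.trans (ih (D.pred v) (by omega))

lemma dualGraph_connected : D.dualGraph.Connected := by
  haveI : Nonempty V := ⟨D.root⟩
  exact SimpleGraph.Connected.mk
    (fun u v => (reach_root (md D u) u le_rfl).trans (reach_root (md D v) v le_rfl).symm)

/-! ### Acyclicity -/

/-- A walk with no repeated edges crossing the "cut" at `w` contains a crossing edge,
and can be split at it. -/
lemma split {w : V} : ∀ {s t : V} (p : D.dualGraph.Walk s t), p.edges.Nodup →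
    D.le w s → ¬ D.le w t →
    ∃ (x y : V) (p1 : D.dualGraph.Walk s x) (p2 : D.dualGraph.Walk y t),
      D.dualGraph.Adj x y ∧ D.le w x ∧ ¬ D.le w y ∧ s(x, y) ∈ p.edges ∧
      s(x, y) ∉ p1.edges ∧ s(x, y) ∉ p2.edges := by
  intro s t p
  induction p with
  | nil => intro _ hws hwt; exact absurd hws hwt
  | @cons s b t h q ih =>
    intro hnd hws hwt
    rw [SimpleGraph.Walk.edges_cons, List.nodup_cons] at hnd
    by_cases hwb : D.le w b
    · obtain ⟨x, y, p1, p2, hadj, hwx, hwy, hmem, hn1, hn2⟩ := ih hnd.2 hwb hwt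
      refine ⟨x, y, SimpleGraph.Walk.cons h p1, p2, hadj, hwx, hwy, ?_, ?_, hn2⟩
      · rw [SimpleGraph.Walk.edges_cons]
        exact List.mem_cons_of_mem _ hmem
      · rw [SimpleGraph.Walk.edges_cons, List.mem_cons]
        rintro (he | he)
        · exact hnd.1 (he ▸ hmem)
        · exact hn1 he
    · refine ⟨s, b, SimpleGraph.Walk.nil, q, h, hws, hwb, ?_, ?_, hnd.1⟩
      · rw [SimpleGraph.Walk.edges_cons]; exact List.mem_cons_self
      · simp

/-- Key lemma: every walk between the endpoints of an edge of the dual graph uses that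
edge. Proved by induction on the depth of the witness of the edge. -/
lemma no_escape : ∀ n (w : V), md D w ≤ n → ∀ a q : V, D.MaxProx a q → w ≠ D.root →
    D.pred w = q → D.le w a → ∀ p : D.dualGraph.Walk a q, s(a, q) ∈ p.edges := by
  intro n
  induction n with
  | zero => intro w hn; exact absurd hn (by simpa using (md_pos w).ne')
  | succ n ih =>
    intro w hw a q hmax hwroot hpw hwa p
    by_contra hnot
    -- replace p by a path avoiding the edge
    set p' := p.bypass with hp'
    have hp'path : p'.IsPath := p.bypass_isPath
    have hnd : p'.edges.Nodup := hp'path.isTrail.edges_nodup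
    have havoid : s(a, q) ∉ p'.edges := fun h => hnot (p.edges_bypass_subset h)
    have hwq : ¬ D.le w q := by
      intro h
      rw [← hpw] at h
      exact D.pred_ne w hwroot (D.le_antisymm _ _ (D.pred_le w hwroot) h)
    obtain ⟨x, y, p1, p2, hadj, hwx, hwy, hmem, hn1, hn2⟩ := split p' hnd hwa hwq
    have hxy : D.MaxProx x y := orient hadj hwx hwy
    have hyx : D.le y x := (D.prox_gt x y hxy.1).1
    have hxyne : x ≠ y := (D.prox_gt x y hxy.1).2
    obtain ⟨w', hw'root, hpw', hw'x⟩ := exists_witness' hyx (Ne.symm hxyne)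
    -- compare w' and w (both ancestors of x)
    have hle : D.le w' w := by
      rcases chain_below' hw'x hwx with h | h
      · exact h
      · by_cases heq : w = w'
        · subst heq; exact D.le_refl w
        · have := D.pred_max w' w hw'root h heq
          rw [hpw'] at this
          exact absurd this hwy
    by_cases heq : w' = w
    · -- same witness: the crossing edge must be the original edge
      subst heq
      have hyq : y = q := by rw [← hpw', hpw]
      subst hyq
      have : x = a := by
        have hproxw : D.prox w' y := by
          have := D.prox_pred w' hw'root
          rwa [hpw'] at this
        exact maxprox_eq hproxw hxy hmax hw'x hwa
      subst this
      exact havoid hmem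
    · -- strictly smaller witness: build a walk from x to y avoiding s(x,y), contradict IH
      have hlt : md D w' < md D w := md_lt hle heq
      have hadjaq : D.dualGraph.Adj a q := adj_of_maxProx hmax
      set W : D.dualGraph.Walk x y :=
        p1.reverse.append (SimpleGraph.Walk.cons hadjaq p2.reverse) with hW
      have hmemW := ih w' (by omega) x y hxy hw'root hpw' hw'x W
      rw [hW, SimpleGraph.Walk.edges_append, SimpleGraph.Walk.edges_cons,
        SimpleGraph.Walk.edges_reverse, SimpleGraph.Walk.edges_reverse] at hmemW
      rcases List.mem_append.1 hmemW with h | h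
      · exact hn1 (List.mem_reverse.1 h)
      · rcases List.mem_cons.1 h with h | h
        · rw [h] at hmem
          exact havoid hmem
        · exact hn2 (List.mem_reverse.1 h)

lemma dualGraph_isAcyclic : D.dualGraph.IsAcyclic := by
  rw [SimpleGraph.isAcyclic_iff_forall_adj_isBridge]
  intro u v huv
  rw [SimpleGraph.isBridge_iff_adj_and_forall_walk_mem_edges]
  refine fun p => ?_
  rcases huv.2 with h | h
  · obtain ⟨w, hw1, hw2, hw3⟩ := exists_witness' (D.prox_gt u v h.1).1
      (Ne.symm (D.prox_gt u v h.1).2)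
    exact no_escape (md D w) w le_rfl u v h hw1 hw2 hw3 p
  · obtain ⟨w, hw1, hw2, hw3⟩ := exists_witness' (D.prox_gt v u h.1).1
      (Ne.symm (D.prox_gt v u h.1).2)
    have := no_escape (md D w) w le_rfl v u h hw1 hw2 hw3 p.reverse
    rw [SimpleGraph.Walk.edges_reverse, List.mem_reverse, Sym2.eq_swap] at this
    exact this

end EnriquesDiagram


/-- The dual graph of any Enriques diagram is a tree. -/
theorem stmt2 {V : Type} [Fintype V] [DecidableEq V] (D : EnriquesDiagram V) :
    D.dualGraph.IsTree := by
  exact ⟨EnriquesDiagram.dualGraph_connected, EnriquesDiagram.dualGraph_isAcyclic⟩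
end

section
/- Let D be an Enriques diagram whose every extremal vertex is free (proximate to exactly one vertex). Let C be the set of non-extremal vertices of D, and suppose C is nonempty and the induced subgraph of Γ_D on C is connected. Then the contraction C is a subdiagram of D (i.e., the immediate predecessor in C of each non-root vertex of C coincides with its immediate predecessor in D), and D is recovered from C by attaching to each vertex p ∈ C exactly r_D(p) − r_C(p) free extremal successors. -/
/-- If every extremal vertex of `D` is free and `C` is the (nonempty, connected)
set of non-extremal vertices of `D`, then the contraction on `C` is a subdiagram
of `D` (predecessors agree) and `D` is obtained from `C` by attaching to each
`p ∈ C` exactly `r_D(p) − r_C(p)` free extremal successors. -/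
theorem stmt9 {V : Type} [Fintype V] [DecidableEq V] (D : EnriquesDiagram V)
    (hfree : ∀ p, D.Extremal p → D.Free p)
    (C : Finset V) (hC : ∀ v, v ∈ C ↔ ¬ D.Extremal v) (hne : C.Nonempty)
    (hconn : (D.dualGraph.induce (↑C : Set V)).Connected)
    (E : EnriquesDiagram {x : V // x ∈ C})
    (hle : ∀ a b, E.le a b ↔ D.le a.1 b.1)
    (hprox : ∀ a b, E.prox a b ↔ D.prox a.1 b.1) :
    (∀ p : {x : V // x ∈ C}, p ≠ E.root → (E.pred p).1 = D.pred p.1) ∧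
    (∀ p, ∀ hp : p ∈ C,
      ({q : V | q ∉ C ∧ q ≠ D.root ∧ D.pred q = p} : Set V).ncard
          = D.r p - E.r ⟨p, hp⟩ ∧
      ∀ q, q ∉ C → q ≠ D.root → D.pred q = p → D.Free q ∧ D.Extremal q) := by
  classical
  have hrootC : D.root ∈ C := by
    rw [hC]
    intro hext
    obtain ⟨q, hq, -⟩ := hfree _ hext
    exact D.root_not_prox q hq
  have hErootval : (E.root).1 = D.root := by
    have h1 : D.le E.root.1 D.root := (hle E.root ⟨D.root, hrootC⟩).mp (E.root_le _)
    exact D.le_antisymm _ _ h1 (D.root_le _)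
  have hnotC : ∀ q, q ∉ C → D.Extremal q := by
    intro q hq
    by_contra h
    exact hq ((hC q).mpr h)
  have part1 : ∀ p : {x : V // x ∈ C}, p ≠ E.root → (E.pred p).1 = D.pred p.1 := by
    intro p hp
    have hpne : p.1 ≠ D.root := by
      intro h
      exact hp (Subtype.ext (h.trans hErootval.symm))
    have hpredC : D.pred p.1 ∈ C := by
      rw [hC]
      intro hext
      exact D.pred_ne _ hpne (hext _ (D.pred_le _ hpne)).symm
    have h1 : D.le (E.pred p).1 p.1 := (hle _ _).mp (E.pred_le p hp)
    have h1' : (E.pred p).1 ≠ p.1 := fun h => E.pred_ne p hp (Subtype.ext h)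
    have h2 : D.le (E.pred p).1 (D.pred p.1) := D.pred_max _ _ hpne h1 h1'
    have h3 : E.le ⟨D.pred p.1, hpredC⟩ p := (hle _ _).mpr (D.pred_le _ hpne)
    have h3' : (⟨D.pred p.1, hpredC⟩ : {x // x ∈ C}) ≠ p :=
      fun h => D.pred_ne _ hpne (congrArg Subtype.val h)
    have h4 : D.le (D.pred p.1) (E.pred p).1 :=
      (hle _ _).mp (E.pred_max p _ hp h3 h3')
    exact D.le_antisymm _ _ h2 h4
  refine ⟨part1, ?_⟩
  intro p hp
  have partb : ∀ q, q ∉ C → q ≠ D.root → D.pred q = p → D.Free q ∧ D.Extremal q := by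
    intro q hqC _ _
    exact ⟨hfree q (hnotC q hqC), hnotC q hqC⟩
  refine ⟨?_, partb⟩
  set B : Set V := {q | D.prox q p} with hB
  set A : Set V := {q | q ∈ C ∧ D.prox q p} with hA
  have hAB : A ⊆ B := fun q hq => hq.2
  have hset : {q : V | q ∉ C ∧ q ≠ D.root ∧ D.pred q = p} = B \ A := by
    ext q
    simp only [Set.mem_setOf_eq, Set.mem_diff, hA, hB]
    constructor
    · rintro ⟨hqC, hqr, hpred⟩
      have hprx : D.prox q p := hpred ▸ D.prox_pred q hqr
      exact ⟨hprx, fun h => hqC h.1⟩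
    · rintro ⟨hprx, hnot⟩
      have hqC : q ∉ C := fun h => hnot ⟨h, hprx⟩
      have hext : D.Extremal q := hnotC q hqC
      have hqr : q ≠ D.root := by
        intro h
        exact ((hC D.root).mp hrootC) (h ▸ hext)
      obtain ⟨u, hu, huniq⟩ := hfree q hext
      refine ⟨hqC, hqr, ?_⟩
      rw [huniq (D.pred q) (D.prox_pred q hqr), huniq p hprx]
  have hcardA : A.ncard = E.r ⟨p, hp⟩ := by
    have himg : Subtype.val '' {q : {x : V // x ∈ C} | E.prox q ⟨p, hp⟩} = A := by
      ext q
      simp only [Set.mem_image, Set.mem_setOf_eq, hA]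
      constructor
      · rintro ⟨a, ha, rfl⟩
        exact ⟨a.2, (hprox a ⟨p, hp⟩).mp ha⟩
      · rintro ⟨hq, hprx⟩
        exact ⟨⟨q, hq⟩, (hprox _ _).mpr hprx, rfl⟩
    rw [EnriquesDiagram.r, ← himg, Set.ncard_image_of_injective _ Subtype.val_injective]
  rw [hset, Set.ncard_diff hAB (Set.toFinite A), hcardA]
  rfl
end

section
/- Let D be an Enriques diagram and C a contraction of D. Suppose v ∈ C is such that v is maximal among the vertices of C proximate to some u ∈ C, and v corresponds to an end of Γ_C. Then v cannot be the root of C, v is free in C, and v is extremal in C. -/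

lemma exists_rel_maximal {α : Type} [Finite α] (le : α → α → Prop)
    (htrans : ∀ a b c, le a b → le b c → le a c)
    (hanti : ∀ a b, le a b → le b a → a = b)
    (S : Set α) (hS : S.Nonempty) :
    ∃ w ∈ S, ∀ x ∈ S, le w x → x = w := by
  let r : α → α → Prop := fun a b => le b a ∧ b ≠ a
  have htr : IsTrans α r := ⟨fun a b c hab hbc =>
    ⟨htrans _ _ _ hbc.1 hab.1, fun h => hab.2 (hanti _ _ hab.1 (h ▸ hbc.1))⟩⟩
  have hir : IsIrrefl α r := ⟨fun a h => h.2 rfl⟩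
  obtain ⟨w, hwS, hmin⟩ := (Finite.wellFounded_of_trans_of_irrefl r).has_min S hS
  exact ⟨w, hwS, fun x hx hle => by
    by_contra hne
    exact hmin x hx ⟨hle, fun h => hne h.symm⟩⟩

/-- If `v` is maximal among the vertices of a contraction `C` proximate to some
`u ∈ C` and `v` is an end of the dual graph `Γ_C`, then `v` is not the root of
`C`, `v` is free in `C`, and `v` is extremal in `C`. -/
theorem stmt15 {V : Type} [Fintype V] [DecidableEq V] (D : EnriquesDiagram V)
    (C : Finset V) (hconn : (D.dualGraph.induce (↑C : Set V)).Connected)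
    (E : EnriquesDiagram {x : V // x ∈ C})
    (hle : ∀ a b, E.le a b ↔ D.le a.1 b.1)
    (hprox : ∀ a b, E.prox a b ↔ D.prox a.1 b.1)
    (v u : {x : V // x ∈ C})
    (hmaxprox : E.MaxProx v u)
    (hend : ∃! w, E.dualGraph.Adj v w) :
    v ≠ E.root ∧ E.Free v ∧ E.Extremal v := by
  obtain ⟨hpvu, hmax⟩ := hmaxprox
  obtain ⟨huv, hvu⟩ := E.prox_gt v u hpvu
  have hvroot : v ≠ E.root := by
    intro h
    exact E.root_not_prox u (h ▸ hpvu)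
  -- v is adjacent to u
  have hadj_u : E.dualGraph.Adj v u := ⟨hvu, Or.inl ⟨hpvu, hmax⟩⟩
  obtain ⟨w₀, hw₀, huniq⟩ := hend
  have hu_eq : u = w₀ := huniq u hadj_u
  -- Extremality
  have hExt : E.Extremal v := by
    intro q hvq
    by_contra hqv
    -- take a minimal successor of v
    obtain ⟨m, ⟨hvm, hmv⟩, hminm⟩ :=
      exists_rel_maximal (fun a b => E.le b a)
        (fun a b c h1 h2 => E.le_trans _ _ _ h2 h1)
        (fun a b h1 h2 => E.le_antisymm _ _ h2 h1)
        {q | E.le v q ∧ q ≠ v} ⟨q, hvq, hqv⟩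
    have hmroot : m ≠ E.root := by
      intro h
      exact hmv (E.le_antisymm _ _ (h ▸ E.root_le v) hvm)
    have hpredm : E.pred m = v := by
      by_contra hne
      have h1 : E.le v (E.pred m) := E.pred_max m v hmroot hvm (fun h => hmv h.symm)
      have h2 := hminm (E.pred m) ⟨h1, hne⟩ (E.pred_le m hmroot)
      exact E.pred_ne m hmroot h2
    have hpm : E.prox m v := hpredm ▸ E.prox_pred m hmroot
    -- maximal element among those proximate to v
    obtain ⟨w, hwS, hmaxw⟩ :=
      exists_rel_maximal E.le E.le_trans E.le_antisymm {q | E.prox q v} ⟨m, hpm⟩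
    obtain ⟨hvw, hwv⟩ := E.prox_gt w v hwS
    have hadj_w : E.dualGraph.Adj v w := ⟨fun h => hwv h.symm, Or.inr ⟨hwS, hmaxw⟩⟩
    have hw_eq : w = w₀ := huniq w hadj_w
    have : u = w := hu_eq.trans hw_eq.symm
    exact hvu (E.le_antisymm _ _ (this ▸ hvw) huv)
  -- Freeness
  have hFree : E.Free v := by
    refine ⟨E.pred v, E.prox_pred v hvroot, fun q' hq' => ?_⟩
    by_contra hne
    have hpp : E.prox v (E.pred v) := E.prox_pred v hvroot
    have hmax1 : E.MaxProx v q' := ⟨hq', fun w _ hvw => hExt w hvw⟩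
    have hmax2 : E.MaxProx v (E.pred v) := ⟨hpp, fun w _ hvw => hExt w hvw⟩
    have hne1 : v ≠ q' := (E.prox_gt v q' hq').2
    have hne2 : v ≠ E.pred v := (E.prox_gt v (E.pred v) hpp).2
    have e1 : q' = w₀ := huniq q' ⟨hne1, Or.inl hmax1⟩
    have e2 : E.pred v = w₀ := huniq (E.pred v) ⟨hne2, Or.inl hmax2⟩
    exact hne (e1.trans e2.symm)
  exact ⟨hvroot, hFree, hExt⟩
end

section
/- Let D be an Enriques diagram all of whose extremal vertices are free (each proximate to exactly one vertex). Then for every satellite vertex s of D, proximate to vertices u_1 and u_2, the dual-graph vertex s lies on the chain in Γ_D between u_1 and u_2; consequently no satellite vertex of D corresponds to an end of Γ_D adjacent only to vertices outside {u_1, u_2}. -/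
namespace EnriquesHelpers

variable {V : Type} [Fintype V] [DecidableEq V] {D : EnriquesDiagram V}

noncomputable def mm (D : EnriquesDiagram V) (v : V) : ℕ := Set.ncard {x | D.le x v}

lemma mm_pos (v : V) : 0 < mm D v :=
  (Set.ncard_pos (Set.toFinite _)).mpr ⟨v, D.le_refl v⟩

lemma mm_le_of_le {a b : V} (h : D.le a b) : mm D a ≤ mm D b :=
  Set.ncard_le_ncard (fun x hx => D.le_trans _ _ _ hx h) (Set.toFinite _)

lemma mm_lt_of_lt {a b : V} (h : D.le a b) (hne : a ≠ b) : mm D a < mm D b := by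
  apply Set.ncard_lt_ncard _ (Set.toFinite _)
  constructor
  · exact fun x hx => D.le_trans _ _ _ hx h
  · intro hsub
    exact hne (D.le_antisymm _ _ h (hsub (D.le_refl b)))

lemma ne_root {a b : V} (h : D.prox a b) : a ≠ D.root :=
  fun e => D.root_not_prox b (e ▸ h)

lemma mm_pred_lt {v : V} (hv : v ≠ D.root) : mm D (D.pred v) < mm D v :=
  mm_lt_of_lt (D.pred_le v hv) (D.pred_ne v hv)

/-- descent of proximity along the predecessor chain -/
lemma prox_descend : ∀ (n : ℕ) (v w z : V), mm D v ≤ n → D.prox v w → D.le z v →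
    ¬ D.le z w → D.prox z w := by
  intro n
  induction n with
  | zero => intro v w z h; exact absurd h (by have := mm_pos (D := D) v; omega)
  | succ n ih =>
    intro v w z hn hvw hzv hzw
    by_cases hvz : v = z
    · exact hvz ▸ hvw
    · have hvroot : v ≠ D.root := by
        intro e
        exact hvz (D.le_antisymm _ _ (e ▸ D.root_le z) hzv)
      have hzp : D.le z (D.pred v) := D.pred_max v z hvroot hzv (fun e => hvz e.symm)
      have hwp : w ≠ D.pred v := fun e => hzw (e ▸ hzp)
      have hpv : D.prox (D.pred v) w := D.prox_pred_prox v w hvroot hvw hwp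
      exact ih _ _ _ (Nat.lt_succ_iff.mp (lt_of_lt_of_le (mm_pred_lt hvroot) hn)) hpv hzp hzw

/-- find the child of `s` below `y` still proximate to `z` -/
lemma child_descend : ∀ (n : ℕ) (y z s : V), mm D y ≤ n → D.prox y z → D.le s y →
    y ≠ s → ¬ D.le s z → ∃ u, D.pred u = s ∧ D.prox u z ∧ D.le u y := by
  intro n
  induction n with
  | zero => intro y z s h; exact absurd h (by have := mm_pos (D := D) y; omega)
  | succ n ih =>
    intro y z s hn hyz hsy hys hsz
    have hyroot : y ≠ D.root := ne_root hyz
    have hsp : D.le s (D.pred y) := D.pred_max y s hyroot hsy (fun e => hys e.symm)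
    have hzp : z ≠ D.pred y := fun e => hsz (e ▸ hsp)
    have hpz : D.prox (D.pred y) z := D.prox_pred_prox y z hyroot hyz hzp
    by_cases h : D.pred y = s
    · exact ⟨y, h, hyz, D.le_refl y⟩
    · obtain ⟨u, h1, h2, h3⟩ := ih (D.pred y) z s
        (Nat.lt_succ_iff.mp (lt_of_lt_of_le (mm_pred_lt hyroot) hn)) hpz hsp h hsz
      exact ⟨u, h1, h2, D.le_trans _ _ _ h3 (D.pred_le y hyroot)⟩

/-- ancestors of a vertex are totally ordered -/
lemma anc_total : ∀ (n : ℕ) (a x y : V), mm D a ≤ n → D.le x a → D.le y a →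
    D.le x y ∨ D.le y x := by
  intro n
  induction n with
  | zero => intro a x y h; exact absurd h (by have := mm_pos (D := D) a; omega)
  | succ n ih =>
    intro a x y hn hx hy
    by_cases hxa : x = a
    · exact Or.inr (hxa ▸ hy)
    by_cases hya : y = a
    · exact Or.inl (hya ▸ hx)
    have haroot : a ≠ D.root := by
      intro e
      exact hxa (D.le_antisymm _ _ hx (e ▸ D.root_le x))
    exact ih (D.pred a) x y (Nat.lt_succ_iff.mp (lt_of_lt_of_le (mm_pred_lt haroot) hn))
      (D.pred_max a x haroot hx hxa) (D.pred_max a y haroot hy hya)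

/-- comparable children of the same vertex are equal -/
lemma child_eq {a b s : V} (ha : D.pred a = s) (hb : D.pred b = s)
    (haroot : a ≠ D.root) (hbroot : b ≠ D.root) (h : D.le a b) : a = b := by
  by_cases hab : a = b
  · exact hab
  · have h1 : D.le a s := hb ▸ D.pred_max b a hbroot h hab
    have h2 : D.le s a := ha ▸ D.pred_le a haroot
    have : a = s := D.le_antisymm _ _ h1 h2
    exact absurd (this ▸ ha) (this ▸ D.pred_ne a haroot)

/-- vertices proximate to `q'` lying over a common vertex `w` (also proximate
to `q'`) are totally ordered -/
lemma prox_chain_total : ∀ (n : ℕ) (u v q' w : V), mm D u ≤ n → D.prox u q' → D.prox v q' →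
    D.prox w q' → D.le w u → D.le w v → D.le u v ∨ D.le v u := by
  intro n
  induction n with
  | zero => intro u v q' w h; exact absurd h (by have := mm_pos (D := D) u; omega)
  | succ n ih =>
    intro u v q' w hn huq hvq hwq hwu hwv
    by_cases huw : u = w
    · exact Or.inl (huw ▸ hwv)
    have huroot : u ≠ D.root := ne_root huq
    have hwpred : D.le w (D.pred u) := D.pred_max u w huroot hwu (fun e => huw e.symm)
    have hnwq : ¬ D.le w q' := by
      intro h
      exact (D.prox_gt w q' hwq).2 (D.le_antisymm _ _ h (D.prox_gt w q' hwq).1)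
    have hq'pred : q' ≠ D.pred u := fun e => hnwq (e ▸ hwpred)
    have hpq : D.prox (D.pred u) q' := D.prox_pred_prox u q' huroot huq hq'pred
    rcases ih (D.pred u) v q' w (Nat.lt_succ_iff.mp (lt_of_lt_of_le (mm_pred_lt huroot) hn))
        hpq hvq hwq hwpred hwv with h | h
    · by_cases hv : v = D.pred u
      · exact Or.inr (hv ▸ D.pred_le u huroot)
      · have hnpq' : ¬ D.le (D.pred u) q' := by
          intro hle
          exact (D.prox_gt _ _ hpq).2 (D.le_antisymm _ _ hle (D.prox_gt _ _ hpq).1)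
        obtain ⟨z, hz1, hz2, hz3⟩ := child_descend (mm D v) v q' (D.pred u) (le_refl _)
          hvq h hv hnpq'
        have hzroot : z ≠ D.root := ne_root hz2
        have hzpred : D.prox z (D.pred u) := hz1 ▸ D.prox_pred z hzroot
        have hupred : D.prox u (D.pred u) := D.prox_pred u huroot
        have : z = u := D.third_unique (D.pred u) q' z u hpq hzpred hz2 hupred huq
        exact Or.inl (this ▸ hz3)
    · exact Or.inr (D.le_trans _ _ _ h (D.pred_le u huroot))

/-- existence of the child of `q` below `p` -/
lemma exists_child : ∀ (n : ℕ) (p q : V), mm D p ≤ n → D.le q p → q ≠ p →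
    ∃ c, D.pred c = q ∧ D.le c p ∧ D.le q c ∧ q ≠ c := by
  intro n
  induction n with
  | zero => intro p q h; exact absurd h (by have := mm_pos (D := D) p; omega)
  | succ n ih =>
    intro p q hn hqp hqnep
    have hproot : p ≠ D.root := by
      intro e
      exact hqnep (D.le_antisymm _ _ hqp (e ▸ D.root_le q))
    have hqpred : D.le q (D.pred p) := D.pred_max p q hproot hqp hqnep
    by_cases h : D.pred p = q
    · exact ⟨p, h, D.le_refl p, hqp, hqnep⟩
    · obtain ⟨c, h1, h2, h3, h4⟩ := ih (D.pred p) q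
        (Nat.lt_succ_iff.mp (lt_of_lt_of_le (mm_pred_lt hproot) hn)) hqpred
        (fun e => h e.symm)
      exact ⟨c, h1, D.le_trans _ _ _ h2 (D.pred_le p hproot), h3, h4⟩

/-- first crossing of a walk over a predicate -/
lemma cross {Γ : SimpleGraph V} (P : V → Prop) :
    ∀ (a b : V) (w : Γ.Walk a b), ¬ P a → P b →
    ∃ (x y : V) (w₁ : Γ.Walk a x) (w₂ : Γ.Walk y b),
      Γ.Adj x y ∧ ¬ P x ∧ P y ∧
      (∀ v ∈ w₁.support, ¬ P v) ∧
      (∀ v ∈ w₁.support, v ∈ w.support) ∧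
      (∀ v ∈ w₂.support, v ∈ w.support) ∧
      w₁.length < w.length ∧ w₂.length < w.length := by
  intro a b w
  induction w with
  | nil => intro h1 h2; exact absurd h2 h1
  | @cons u v b h p ih =>
    intro hPa hPb
    by_cases hPv : P v
    · refine ⟨u, v, SimpleGraph.Walk.nil, p, h, hPa, hPv, ?_, ?_, ?_, ?_, ?_⟩
      · intro x hx
        simp only [SimpleGraph.Walk.support_nil, List.mem_singleton] at hx
        exact hx ▸ hPa
      · intro x hx
        simp only [SimpleGraph.Walk.support_nil, List.mem_singleton] at hx
        simp [SimpleGraph.Walk.support_cons, hx]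
      · intro x hx
        simp [SimpleGraph.Walk.support_cons]
        exact Or.inr hx
      · simp [SimpleGraph.Walk.length_cons]
      · simp [SimpleGraph.Walk.length_cons]
    · obtain ⟨x, y, w₁, w₂, hadj, hPx, hPy, hall, hm1, hm2, hl1, hl2⟩ := ih hPv hPb
      refine ⟨x, y, SimpleGraph.Walk.cons h w₁, w₂, hadj, hPx, hPy, ?_, ?_, ?_, ?_, ?_⟩
      · intro z hz
        rw [SimpleGraph.Walk.support_cons, List.mem_cons] at hz
        rcases hz with rfl | hz
        · exact hPa
        · exact hall z hz
      · intro z hz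
        rw [SimpleGraph.Walk.support_cons, List.mem_cons] at hz
        rw [SimpleGraph.Walk.support_cons, List.mem_cons]
        rcases hz with rfl | hz
        · exact Or.inl rfl
        · exact Or.inr (hm1 z hz)
      · intro z hz
        rw [SimpleGraph.Walk.support_cons, List.mem_cons]
        exact Or.inr (hm2 z hz)
      · simpa [SimpleGraph.Walk.length_cons] using hl1
      · simp only [SimpleGraph.Walk.length_cons]
        omega


/-- Main lemma: a walk from `q` (or from any `y` proximate to `q` above `s`)
to `pred s` must contain the satellite `s`, where `prox s q`, `q ≠ pred s`. -/
lemma main : ∀ (n : ℕ) (s q y : V), D.prox s q → q ≠ D.pred s →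
    (y = q ∨ (D.prox y q ∧ D.le s y)) →
    ∀ (w : (D.dualGraph).Walk y (D.pred s)), w.length ≤ n → s ∈ w.support := by
  intro n
  induction n with
  | zero =>
    intro s q y hsq hqp hy w hn
    have hlen : w.length = 0 := Nat.le_zero.mp hn
    have hyp : y = D.pred s := SimpleGraph.Walk.eq_of_length_eq_zero hlen
    have hsroot : s ≠ D.root := ne_root hsq
    rcases hy with rfl | ⟨hyq, hsy⟩
    · exact absurd hyp hqp
    · have h1 : D.le s (D.pred s) := hyp ▸ hsy
      have h2 : D.le (D.pred s) s := D.pred_le s hsroot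
      exact absurd (D.le_antisymm _ _ h2 h1) (D.pred_ne s hsroot)
  | succ n ih =>
    intro s q y hsq hqp hy w hn
    have hsroot : s ≠ D.root := ne_root hsq
    have hsp : D.prox s (D.pred s) := D.prox_pred s hsroot
    have hpq : D.prox (D.pred s) q := D.prox_pred_prox s q hsroot hsq hqp
    have hqs_le : D.le q s := (D.prox_gt s q hsq).1
    have hs_ne_q : s ≠ q := (D.prox_gt s q hsq).2
    have hqp_le : D.le q (D.pred s) := (D.prox_gt _ _ hpq).1
    have hp_ne_q : D.pred s ≠ q := (D.prox_gt _ _ hpq).2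
    have hps_le : D.le (D.pred s) s := D.pred_le s hsroot
    have hp_ne_s : D.pred s ≠ s := D.pred_ne s hsroot
    have hnsp : ¬ D.le s (D.pred s) := fun h => hp_ne_s (D.le_antisymm _ _ hps_le h)
    have hnsq : ¬ D.le s q := fun h => hs_ne_q (D.le_antisymm _ _ h hqs_le)
    by_cases hys : y = s
    · subst hys
      exact w.start_mem_support
    rcases hy with rfl | ⟨hyq, hsy⟩
    · -- case: the walk starts at y
      obtain ⟨c, hc_pred, hc_le_p, hq_le_c, hq_ne_c⟩ :=
        exists_child (mm D (D.pred s)) (D.pred s) y (le_refl _) hqp_le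
          (fun e => hp_ne_q e.symm)
      have hcroot : c ≠ D.root := by
        intro e
        exact hq_ne_c (D.le_antisymm _ _ hq_le_c (e ▸ D.root_le y))
      have hcq : D.prox c y := hc_pred ▸ D.prox_pred c hcroot
      have hnPq : ¬ D.le c y := fun h => hq_ne_c (D.le_antisymm _ _ hq_le_c h)
      obtain ⟨x, y', w₁, w₂, hadj, hPx, hPy, hall, hm1, hm2, hl1, hl2⟩ :=
        cross (D.le c) y (D.pred s) w hnPq hc_le_p
      obtain ⟨hne_xy, hor⟩ := hadj
      have hyx : D.MaxProx y' x := by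
        rcases hor with h | h
        · exact absurd (D.le_trans _ _ _ hPy (D.prox_gt _ _ h.1).1) hPx
        · exact h
      have hproxcx : D.prox c x := prox_descend (mm D y') y' x c (le_refl _) hyx.1 hPy hPx
      by_cases hxq : x = y
      · subst hxq
        rcases prox_chain_total (mm D s) s y' x c (le_refl _) hsq hyx.1 hcq
            (D.le_trans _ _ _ hc_le_p hps_le) hPy with h | h
        · exact hm2 s (ih s x y' hsq hqp (Or.inr ⟨hyx.1, h⟩) w₂ (by omega))
        · have hsy' : s = y' := hyx.2 s hsq h
          exact hm2 s (hsy' ▸ w₂.start_mem_support)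
      · have hxpredc : x ≠ D.pred c := fun e => hxq (e.trans hc_pred)
        have hc_in : c ∈ (w₁.reverse.copy rfl hc_pred.symm).support := by
          apply ih c x x hproxcx hxpredc (Or.inl rfl)
          rw [SimpleGraph.Walk.length_copy, SimpleGraph.Walk.length_reverse]
          omega
        rw [SimpleGraph.Walk.support_copy, SimpleGraph.Walk.support_reverse,
          List.mem_reverse] at hc_in
        exact absurd (D.le_refl c) (hall c hc_in)
    · -- case: the walk starts at y with prox y q, s ≤ y, y ≠ s
      obtain ⟨x, y', w₁, w₂, hadj, hPx, hPy, hall, hm1, hm2, hl1, hl2⟩ :=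
        cross (fun v => ¬ D.le s v) y (D.pred s) w (fun h => h hsy) hnsp
      have hsx : D.le s x := not_not.mp hPx
      obtain ⟨hne_xy, hor⟩ := hadj
      have hxy : D.MaxProx x y' := by
        rcases hor with h | h
        · exact h
        · exact absurd (D.le_trans _ _ _ hsx (D.prox_gt _ _ h.1).1) hPy
      have hproxsy' : D.prox s y' := prox_descend (mm D x) x y' s (le_refl _) hxy.1 hsx hPy
      by_cases hxs : x = s
      · exact hm1 s (hxs ▸ w₁.end_mem_support)
      have hy'pq : y' = D.pred s ∨ y' = q := by
        rcases D.prox_at_most_two s y' (D.pred s) q hproxsy' hsp hsq with h | h | h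
        · exact Or.inl h
        · exact absurd h.symm hqp
        · exact Or.inr h
      rcases hy'pq with hy'p | hy'q
      · -- crossed out towards pred s: find the hidden crossing at s
        have hproxxp : D.prox x (D.pred s) := hy'p ▸ hxy.1
        obtain ⟨t, ht_pred, ht_prox, ht_le⟩ := child_descend (mm D x) x (D.pred s) s
          (le_refl _) hproxxp hsx hxs hnsp
        obtain ⟨s₂, hs₂_pred, hs₂_prox, hs₂_le⟩ := child_descend (mm D y) y q s
          (le_refl _) hyq hsy hys hnsq
        have htroot : t ≠ D.root := ne_root ht_prox
        have hs₂root : s₂ ≠ D.root := ne_root hs₂_prox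
        have hts₂ : t ≠ s₂ := by
          intro e
          have hts : D.prox t s := ht_pred ▸ D.prox_pred t htroot
          have htq : D.prox t q := e ▸ hs₂_prox
          rcases D.prox_at_most_two t (D.pred s) s q ht_prox hts htq with h | h | h
          · exact hp_ne_s h
          · exact hs_ne_q h
          · exact hp_ne_q h
        have hns₂x : ¬ D.le s₂ x := by
          intro h
          rcases anc_total (mm D x) x s₂ t (le_refl _) h ht_le with hh | hh
          · exact hts₂ (child_eq hs₂_pred ht_pred hs₂root htroot hh).symm
          · exact hts₂ (child_eq ht_pred hs₂_pred htroot hs₂root hh)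
        obtain ⟨x₁, y₁, w₁', w₂', hadj', hPx₁, hPy₁, hall', hm1', hm2', hl1', hl2'⟩ :=
          cross (D.le s₂) x y w₁.reverse hns₂x hs₂_le
        obtain ⟨hne', hor'⟩ := hadj'
        have hy₁x₁ : D.MaxProx y₁ x₁ := by
          rcases hor' with h | h
          · exact absurd (D.le_trans _ _ _ hPy₁ (D.prox_gt _ _ h.1).1) hPx₁
          · exact h
        have hproxs₂x₁ : D.prox s₂ x₁ :=
          prox_descend (mm D y₁) y₁ x₁ s₂ (le_refl _) hy₁x₁.1 hPy₁ hPx₁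
        have hx₁_mem : x₁ ∈ w₁.support := by
          have := hm1' x₁ w₁'.end_mem_support
          rwa [SimpleGraph.Walk.support_reverse, List.mem_reverse] at this
        have hsx₁ : D.le s x₁ := not_not.mp (hall x₁ hx₁_mem)
        have hproxs₂s : D.prox s₂ s := hs₂_pred ▸ D.prox_pred s₂ hs₂root
        rcases D.prox_at_most_two s₂ x₁ s q hproxs₂x₁ hproxs₂s hs₂_prox with h | h | h
        · exact hm1 s (h ▸ hx₁_mem)
        · exact absurd h hs_ne_q
        · exact absurd (h ▸ hsx₁) hnsq
      · -- crossed out towards q: recurse on the remaining walk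
        have hmem := ih s q q hsq hqp (Or.inl rfl) (w₂.copy hy'q rfl)
          (by rw [SimpleGraph.Walk.length_copy]; omega)
        rw [SimpleGraph.Walk.support_copy] at hmem
        exact hm2 s hmem

/-- over each child `t` of `s` there is a vertex maximal among those
proximate to `s` -/
lemma exists_maxprox_above {t s : V} (ht : D.pred t = s) (htroot : t ≠ D.root) :
    ∃ m, D.MaxProx m s ∧ D.le t m := by
  obtain ⟨m, hmS, hmax⟩ := Set.Finite.exists_maximalFor (mm D)
    {v | D.prox v s ∧ D.le t v} (Set.toFinite _)
    ⟨t, ht ▸ D.prox_pred t htroot, D.le_refl t⟩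
  refine ⟨m, ⟨hmS.1, ?_⟩, hmS.2⟩
  intro u hu hmu
  by_contra hne
  have huS : D.prox u s ∧ D.le t u := ⟨hu, D.le_trans _ _ _ hmS.2 hmu⟩
  have h1 := hmax huS (mm_le_of_le hmu)
  have h2 := mm_lt_of_lt hmu (fun e => hne e.symm)
  omega

end EnriquesHelpers

/-- If every extremal vertex of `D` is free, then every satellite vertex `s`,
proximate to `u₁` and `u₂`, lies on the chain of the dual graph between `u₁`
and `u₂`; consequently `s` is not an end of `Γ_D` adjacent only to a vertex
outside `{u₁, u₂}`. -/
theorem stmt18 {V : Type} [Fintype V] [DecidableEq V] (D : EnriquesDiagram V)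
    (hfree : ∀ p, D.Extremal p → D.Free p)
    (s u1 u2 : V) (h1 : D.prox s u1) (h2 : D.prox s u2) (h12 : u1 ≠ u2) :
    (∀ w : D.dualGraph.Walk u1 u2, w.IsPath → s ∈ w.support) ∧
    ¬ (∃ x, D.dualGraph.Adj s x ∧ x ≠ u1 ∧ x ≠ u2 ∧
        ∀ y, D.dualGraph.Adj s y → y = x) := by
  classical
  have hsroot : s ≠ D.root := EnriquesHelpers.ne_root h1
  have hsp : D.prox s (D.pred s) := D.prox_pred s hsroot
  have hpred12 : D.pred s = u1 ∨ D.pred s = u2 := by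
    rcases D.prox_at_most_two s u1 (D.pred s) u2 h1 hsp h2 with h | h | h
    · exact Or.inl h.symm
    · exact Or.inr h
    · exact absurd h h12
  obtain ⟨q, hq_mem, hsq, hqp⟩ : ∃ q, (q = u1 ∨ q = u2) ∧ D.prox s q ∧ q ≠ D.pred s := by
    rcases hpred12 with h | h
    · exact ⟨u2, Or.inr rfl, h2, fun e => h12 (e.trans h).symm⟩
    · exact ⟨u1, Or.inl rfl, h1, fun e => h12 (e.trans h)⟩
  constructor
  · intro w _
    rcases hpred12 with h | h
    · -- pred s = u1 : use the reversed walk from u2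
      have hu2p : u2 ≠ D.pred s := fun e => h12 (e.trans h).symm
      have hmem := EnriquesHelpers.main (w.reverse.length) s u2 u2 h2 hu2p (Or.inl rfl)
        (w.reverse.copy rfl h.symm)
        (by rw [SimpleGraph.Walk.length_copy])
      rw [SimpleGraph.Walk.support_copy, SimpleGraph.Walk.support_reverse,
        List.mem_reverse] at hmem
      exact hmem
    · have hu1p : u1 ≠ D.pred s := fun e => h12 (e.trans h)
      have hmem := EnriquesHelpers.main w.length s u1 u1 h1 hu1p (Or.inl rfl)
        (w.copy rfl h.symm)
        (by rw [SimpleGraph.Walk.length_copy])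
      rwa [SimpleGraph.Walk.support_copy] at hmem
  · rintro ⟨x, hadjx, hx1, hx2, huniq⟩
    have hqs_le : D.le q s := (D.prox_gt s q hsq).1
    have hs_ne_q : s ≠ q := (D.prox_gt s q hsq).2
    have hnsq : ¬ D.le s q := fun hh => hs_ne_q (D.le_antisymm _ _ hh hqs_le)
    have hps_le : D.le (D.pred s) s := D.pred_le s hsroot
    have hp_ne_s : D.pred s ≠ s := D.pred_ne s hsroot
    have hnsp : ¬ D.le s (D.pred s) := fun hh => hp_ne_s (D.le_antisymm _ _ hps_le hh)
    by_cases hEp : ∃ u, D.prox u (D.pred s) ∧ D.le s u ∧ u ≠ s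
    · by_cases hEq : ∃ u, D.prox u q ∧ D.le s u ∧ u ≠ s
      · -- both proximity chains continue above s : it has two upper neighbours
        obtain ⟨u, hu1, hu2', hu3⟩ := hEp
        obtain ⟨t, ht_pred, ht_prox, ht_le⟩ := EnriquesHelpers.child_descend
          (EnriquesHelpers.mm D u) u (D.pred s) s (le_refl _) hu1 hu2' hu3 hnsp
        obtain ⟨u', hv1, hv2', hv3⟩ := hEq
        obtain ⟨s₂, hs₂_pred, hs₂_prox, hs₂_le⟩ := EnriquesHelpers.child_descend
          (EnriquesHelpers.mm D u') u' q s (le_refl _) hv1 hv2' hv3 hnsq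
        have htroot : t ≠ D.root := EnriquesHelpers.ne_root ht_prox
        have hs₂root : s₂ ≠ D.root := EnriquesHelpers.ne_root hs₂_prox
        have hts₂ : t ≠ s₂ := by
          intro e
          have hts : D.prox t s := ht_pred ▸ D.prox_pred t htroot
          have htq : D.prox t q := e ▸ hs₂_prox
          rcases D.prox_at_most_two t (D.pred s) s q ht_prox hts htq with h | h | h
          · exact hp_ne_s h
          · exact hs_ne_q h
          · exact (D.prox_gt _ _ (D.prox_pred_prox s q hsroot hsq hqp)).2 h
        obtain ⟨m₁, hm₁max, hm₁le⟩ := EnriquesHelpers.exists_maxprox_above ht_pred htroot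
        obtain ⟨m₂, hm₂max, hm₂le⟩ := EnriquesHelpers.exists_maxprox_above hs₂_pred hs₂root
        have hchild_ne : ∀ m t', D.pred t' = s → t' ≠ D.root → D.le t' m → m ≠ s := by
          intro m t' hpredt' ht'root hle e
          have h1 : D.le t' s := e ▸ hle
          have h2 : D.le s t' := hpredt' ▸ D.pred_le t' ht'root
          exact (hpredt' ▸ D.pred_ne t' ht'root) (D.le_antisymm _ _ h2 h1)
        have hm₁ne : m₁ ≠ s := hchild_ne m₁ t ht_pred htroot hm₁le
        have hm₂ne : m₂ ≠ s := hchild_ne m₂ s₂ hs₂_pred hs₂root hm₂le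
        have hadj₁ : D.dualGraph.Adj s m₁ := ⟨fun e => hm₁ne e.symm, Or.inr hm₁max⟩
        have hadj₂ : D.dualGraph.Adj s m₂ := ⟨fun e => hm₂ne e.symm, Or.inr hm₂max⟩
        have hm₁₂ : m₁ ≠ m₂ := by
          intro e
          rcases EnriquesHelpers.anc_total (EnriquesHelpers.mm D m₁) m₁ t s₂ (le_refl _)
              hm₁le (e ▸ hm₂le) with hh | hh
          · exact hts₂ (EnriquesHelpers.child_eq ht_pred hs₂_pred htroot hs₂root hh)
          · exact hts₂ (EnriquesHelpers.child_eq hs₂_pred ht_pred hs₂root htroot hh).symm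
        exact hm₁₂ ((huniq m₁ hadj₁).trans (huniq m₂ hadj₂).symm)
      · -- s is maximal among the vertices proximate to q : s — q is an edge
        have hmax : D.MaxProx s q :=
          ⟨hsq, fun u hu hsu => by_contra fun hne => hEq ⟨u, hu, hsu, hne⟩⟩
        have hadj : D.dualGraph.Adj s q := ⟨hs_ne_q, Or.inl hmax⟩
        have hqx := huniq q hadj
        rcases hq_mem with h | h
        · exact hx1 (hqx.symm.trans h)
        · exact hx2 (hqx.symm.trans h)
    · -- s is maximal among the vertices proximate to pred s : s — pred s is an edge
      have hmax : D.MaxProx s (D.pred s) :=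
        ⟨hsp, fun u hu hsu => by_contra fun hne => hEp ⟨u, hu, hsu, hne⟩⟩
      have hadj : D.dualGraph.Adj s (D.pred s) := ⟨fun e => hp_ne_s e.symm, Or.inl hmax⟩
      have hpx := huniq (D.pred s) hadj
      rcases hpred12 with h | h
      · exact hx1 (hpx.symm.trans h)
      · exact hx2 (hpx.symm.trans h)
end
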